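/- Fix r > 0. Then the integral ∫₀^r (1 − exp(−2μ·√(r² − u²))) du converges to r as μ → ∞, and it is monotone nondecreasing in μ. Consequently, for every λ > 0, the nearest-distance distribution function F_μ(r) = 1 − exp(−2λ·∫₀^r (1 − exp(−2μ·√(r² − u²))) du) of the Poisson line Cox process converges, as μ → ∞, to 1 − exp(−2λr), the distribution function of the distance from the origin to the nearest line of the Poisson line process. -/

import Mathlib

open Filter MeasureTheory

/-- For fixed `r > 0`, the integral `∫₀^r (1 − e^{−2μ√(r²−u²)}) du` is nondecreasing in `μ`
and converges to `r` as `μ → ∞`; consequently the nearest-distance distribution function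
`F_μ(r) = 1 − exp(−2λ ∫₀^r (1 − e^{−2μ√(r²−u²)}) du)` of the Poisson line Cox process
converges, as `μ → ∞`, to `1 − exp(−2λr)`, the distribution function of the distance to
the nearest line. -/
theorem nearest_distance_limit (r : ℝ) (hr : 0 < r) :
    Tendsto (fun μ : ℝ => ∫ u in (0:ℝ)..r, (1 - Real.exp (-2 * μ * Real.sqrt (r ^ 2 - u ^ 2))))
      atTop (nhds r) ∧
    Monotone (fun μ : ℝ =>
      ∫ u in (0:ℝ)..r, (1 - Real.exp (-2 * μ * Real.sqrt (r ^ 2 - u ^ 2)))) ∧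
    ∀ lam : ℝ, 0 < lam →
      Tendsto (fun μ : ℝ => 1 - Real.exp (-2 * lam *
          ∫ u in (0:ℝ)..r, (1 - Real.exp (-2 * μ * Real.sqrt (r ^ 2 - u ^ 2)))))
        atTop (nhds (1 - Real.exp (-2 * lam * r))) := by
  have hcont : ∀ μ : ℝ, Continuous fun u : ℝ => 1 - Real.exp (-2 * μ * Real.sqrt (r ^ 2 - u ^ 2)) := by
    intro μ
    continuity
  have htend : Tendsto (fun μ : ℝ => ∫ u in (0:ℝ)..r,
      (1 - Real.exp (-2 * μ * Real.sqrt (r ^ 2 - u ^ 2)))) atTop (nhds r) := by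
    have key : Tendsto (fun μ : ℝ => ∫ u in Set.Ioo (0:ℝ) r,
        (1 - Real.exp (-2 * μ * Real.sqrt (r ^ 2 - u ^ 2)))) atTop
        (nhds (∫ _ in Set.Ioo (0:ℝ) r, (1:ℝ))) := by
      apply tendsto_integral_filter_of_dominated_convergence (fun _ => (1:ℝ))
      · filter_upwards with μ
        exact ((hcont μ).aestronglyMeasurable).restrict
      · filter_upwards [eventually_ge_atTop (0:ℝ)] with μ hμ
        filter_upwards [ae_restrict_mem measurableSet_Ioo] with u hu
        have hs : 0 ≤ Real.sqrt (r ^ 2 - u ^ 2) := Real.sqrt_nonneg _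
        have he : Real.exp (-2 * μ * Real.sqrt (r ^ 2 - u ^ 2)) ≤ 1 := by
          rw [← Real.exp_zero]
          apply Real.exp_le_exp.mpr
          nlinarith
        have hp : 0 < Real.exp (-2 * μ * Real.sqrt (r ^ 2 - u ^ 2)) := Real.exp_pos _
        rw [Real.norm_eq_abs, abs_le]
        constructor <;> linarith
      · exact (integrableOn_const_iff (C := (1:ℝ))).mpr (Or.inr measure_Ioo_lt_top)
      · filter_upwards [ae_restrict_mem measurableSet_Ioo] with u hu
        have hs : 0 < Real.sqrt (r ^ 2 - u ^ 2) := by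
          apply Real.sqrt_pos.mpr
          nlinarith [hu.1, hu.2]
        have : Tendsto (fun μ : ℝ => -2 * μ * Real.sqrt (r ^ 2 - u ^ 2)) atTop atBot := by
          have := Filter.Tendsto.atTop_mul_const_of_neg (r := -2 * Real.sqrt (r ^ 2 - u ^ 2)) (by linarith) tendsto_id
          apply this.congr
          intro x; simp only [id]; ring
        have hexp := Real.tendsto_exp_atBot.comp this
        have : Tendsto (fun μ : ℝ => 1 - Real.exp (-2 * μ * Real.sqrt (r ^ 2 - u ^ 2)))
            atTop (nhds (1 - 0)) := tendsto_const_nhds.sub hexp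
        simpa using this
    have hval : (∫ _ in Set.Ioo (0:ℝ) r, (1:ℝ)) = r := by
      simp [Real.volume_Ioo, hr.le]
    rw [hval] at key
    apply key.congr
    intro μ
    rw [intervalIntegral.integral_of_le hr.le, integral_Ioc_eq_integral_Ioo]
  have hmono : Monotone (fun μ : ℝ =>
      ∫ u in (0:ℝ)..r, (1 - Real.exp (-2 * μ * Real.sqrt (r ^ 2 - u ^ 2)))) := by
    intro a b hab
    apply intervalIntegral.integral_mono_on hr.le ((hcont a).intervalIntegrable 0 r)
      ((hcont b).intervalIntegrable 0 r)
    intro u hu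
    have hs : 0 ≤ Real.sqrt (r ^ 2 - u ^ 2) := Real.sqrt_nonneg _
    have : Real.exp (-2 * b * Real.sqrt (r ^ 2 - u ^ 2)) ≤
        Real.exp (-2 * a * Real.sqrt (r ^ 2 - u ^ 2)) := by
      apply Real.exp_le_exp.mpr
      nlinarith
    linarith
  refine ⟨htend, hmono, fun lam _ => ?_⟩
  have h1 : Tendsto (fun μ : ℝ => -2 * lam *
      ∫ u in (0:ℝ)..r, (1 - Real.exp (-2 * μ * Real.sqrt (r ^ 2 - u ^ 2)))) atTop
      (nhds (-2 * lam * r)) := htend.const_mul _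
  exact tendsto_const_nhds.sub ((Real.continuous_exp.tendsto _).comp h1)
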